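/- For a directed space X, the downward closure ↓η = {ξ ∈ SV(X) : ξ ≤ η} of any simple valuation η in the pointwise order is closed in the ⇒_P-convergence topology on SV(X). -/

import Mathlib

open Set

/-- The specialization order on a topological space: `x ⊑ y` iff `x ∈ closure {y}`. -/
def sOrd (X : Type*) [TopologicalSpace X] (x y : X) : Prop := x ∈ closure {y}

/-- A directed subset `D`, viewed as a net indexed by itself, converges to `x`:
it is eventually in every open neighborhood of `x`. -/
def dconv (X : Type*) [TopologicalSpace X] (D : Set X) (x : X) : Prop :=
  D.Nonempty ∧ DirectedOn (sOrd X) D ∧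
    ∀ U : Set X, IsOpen U → x ∈ U → ∃ d ∈ D, ∀ e ∈ D, sOrd X d e → e ∈ U

/-- A subset `U` is directed open if every directed net converging to a point of `U`
meets `U`. -/
def dOpen (X : Type*) [TopologicalSpace X] (U : Set X) : Prop :=
  ∀ D x, dconv X D x → x ∈ U → (D ∩ U).Nonempty

open scoped ENNReal
open Classical in
/-- The point valuation `η_x`: `η_x U = 1` if `x ∈ U`, else `0`. -/
noncomputable def pv {X : Type*} (x : X) (U : Set X) : ℝ≥0∞ :=
  if x ∈ U then 1 else 0

open Classical in
/-- The simple valuation `Σ_{b ∈ B} r b · η_b`. -/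
noncomputable def simpleVal {X : Type*} (B : Finset X) (r : X → ℝ≥0∞) (U : Set X) : ℝ≥0∞ :=
  ∑ b ∈ B, if b ∈ U then r b else 0

/-- The pointwise order on valuations, comparing values on open sets. -/
def svLe {X : Type*} [TopologicalSpace X] (ξ η : Set X → ℝ≥0∞) : Prop :=
  ∀ U : Set X, IsOpen U → ξ U ≤ η U

/-- The set `SV(X)` of simple valuations on `X`. -/
def SVset (X : Type*) [TopologicalSpace X] : Set (Set X → ℝ≥0∞) :=
  {ξ | ∃ (B : Finset X) (r : X → ℝ≥0∞),
    (∀ b ∈ B, 0 < r b ∧ r b ≠ ⊤) ∧ ξ = fun U => simpleVal B r U}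

open Classical in
/-- The simple valuation `Σ_{b ∈ B} r' b · η_{d b}` obtained by moving each support
point `b` to `d b` and shrinking coefficients to `r' b`. -/
noncomputable def shiftVal {X : Type*} (B : Finset X) (d : X → X) (r' : X → ℝ≥0∞)
    (U : Set X) : ℝ≥0∞ :=
  ∑ b ∈ B, if d b ∈ U then r' b else 0

/-- The convergence relation `𝔇 ⇒_P ξ` on simple valuations: `𝔇` is a directed family
of simple valuations, `ξ = Σ_{b∈B} r_b η_b`, there are directed sets `D_b → b` in `X`,
and for every choice `d b ∈ D b` and every `r' b < r b` some member of `𝔇` dominates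
`Σ_{b∈B} r'_b η_{d b}`. -/
def PConv {X : Type*} [TopologicalSpace X] (𝔇 : Set (Set X → ℝ≥0∞))
    (ξ : Set X → ℝ≥0∞) : Prop :=
  𝔇 ⊆ SVset X ∧ 𝔇.Nonempty ∧ DirectedOn svLe 𝔇 ∧
    ∃ (B : Finset X) (r : X → ℝ≥0∞),
      (∀ b ∈ B, 0 < r b ∧ r b ≠ ⊤) ∧ (ξ = fun U => simpleVal B r U) ∧
      ∃ D : X → Set X, (∀ b ∈ B, dconv X (D b) b) ∧
        ∀ d : X → X, (∀ b ∈ B, d b ∈ D b) →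
          ∀ r' : X → ℝ≥0∞, (∀ b ∈ B, r' b < r b) →
            ∃ ξ' ∈ 𝔇, svLe (shiftVal B d r') ξ'

/-- `⇒_P`-convergence open subsets of `SV(X)`. -/
def POpen {X : Type*} [TopologicalSpace X] (𝔘 : Set (Set X → ℝ≥0∞)) : Prop :=
  𝔘 ⊆ SVset X ∧ ∀ 𝔇 ξ, PConv 𝔇 ξ → ξ ∈ 𝔘 → (𝔇 ∩ 𝔘).Nonempty

/-- For a directed space `X`, the downward closure
`↓η = {ξ ∈ SV(X) : ξ ≤ η}` of a simple valuation `η` in the pointwise order is closed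
in the `⇒_P`-convergence topology, i.e. its complement in `SV(X)` is `⇒_P`-open. -/
theorem stmt_13 {X : Type*} [TopologicalSpace X] [T0Space X]
    (hX : ∀ U : Set X, dOpen X U ↔ IsOpen U)
    (η : Set X → ℝ≥0∞) (hη : η ∈ SVset X) :
    POpen {ξ ∈ SVset X | ¬ svLe ξ η} := by
  classical
  constructor
  · intro ξ hξ; exact hξ.1
  rintro 𝔇 ξ ⟨h𝔇sub, h𝔇ne, h𝔇dir, B, r, hr, hξeq, D, hD, hmain⟩ ⟨hξSV, hξnle⟩
  -- find open U with η U < ξ U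
  have : ∃ U : Set X, IsOpen U ∧ η U < ξ U := by
    by_contra h
    push_neg at h
    exact hξnle (fun U hU => h U hU)
  obtain ⟨U, hU, hlt⟩ := this
  -- ξ U is finite and equals simpleVal B r U
  have hξU : ξ U = simpleVal B r U := by rw [hξeq]
  set S := ξ U with hS
  have hSfin : S ≠ ⊤ := by
    rw [hξU]
    refine (ENNReal.sum_lt_top.mpr fun b hb => ?_).ne
    split
    · exact lt_top_iff_ne_top.mpr (hr b hb).2
    · exact ENNReal.zero_lt_top
  have hS0 : S ≠ 0 := (pos_of_gt hlt).ne'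
  -- pick c strictly between η U and S, scale factor t = c / S
  obtain ⟨c, hc1, hc2⟩ := exists_between hlt
  set t := c / S with ht
  have ht1 : t < 1 := by
    rw [ht, ENNReal.div_lt_iff (Or.inl hS0) (Or.inl hSfin), one_mul]
    exact hc2
  have hSt : S * t = c := ENNReal.mul_div_cancel hS0 hSfin
  -- choose the d function
  have hchoice : ∀ b : X, ∃ x : X, b ∈ B → x ∈ D b ∧ (b ∈ U → x ∈ U) := by
    intro b
    by_cases hb : b ∈ B
    · by_cases hbU : b ∈ U
      · obtain ⟨d₀, hd₀D, hd₀⟩ := (hD b hb).2.2 U hU hbU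
        exact ⟨d₀, fun _ => ⟨hd₀D, fun _ => hd₀ d₀ hd₀D (subset_closure rfl)⟩⟩
      · obtain ⟨d₀, hd₀D⟩ := (hD b hb).1
        exact ⟨d₀, fun _ => ⟨hd₀D, fun h => absurd h hbU⟩⟩
    · exact ⟨b, fun h => absurd h hb⟩
  choose d hd using hchoice
  have hdD : ∀ b ∈ B, d b ∈ D b := fun b hb => (hd b hb).1
  -- shrunk coefficients
  have hr' : ∀ b ∈ B, r b * t < r b := by
    intro b hb
    calc r b * t < r b * 1 := by
          exact ENNReal.mul_lt_mul_iff_right (hr b hb).1.ne' (hr b hb).2 |>.mpr ht1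
      _ = r b := mul_one _
  obtain ⟨ξ', hξ'𝔇, hξ'le⟩ := hmain d hdD (fun b => r b * t) hr'
  refine ⟨ξ', hξ'𝔇, h𝔇sub hξ'𝔇, ?_⟩
  -- show ¬ svLe ξ' η : ξ' U ≥ shiftVal ... U ≥ S * t = c > η U
  intro hle
  have h1 : shiftVal B d (fun b => r b * t) U ≤ ξ' U := hξ'le U hU
  have h2 : S * t ≤ shiftVal B d (fun b => r b * t) U := by
    rw [hξU, simpleVal, shiftVal, Finset.sum_mul]
    refine Finset.sum_le_sum fun b hb => ?_
    rw [ite_mul, zero_mul]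
    by_cases hbU : b ∈ U
    · rw [if_pos hbU, if_pos ((hd b hb).2 hbU)]
    · rw [if_neg hbU]; exact zero_le
  have := lt_of_lt_of_le hc1 (hSt ▸ h2.trans (h1.trans (hle U hU)))
  exact absurd this (lt_irrefl _)
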